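/- Assume m > n. Every homogeneous quasi-invariant p ∈ R of total degree strictly less than (2n+1)N is I₂(2N)-invariant: σⱼ(p) = p for all j = 0,…,2N−1. -/

import Mathlib

section PolyHelpers
open Polynomial Finset

lemma iterDerivEvalZero (c : ℂ) : ∀ (r : ℕ) (s : ℕ) (G : ℂ[X]), r < s →
    (Polynomial.derivative^[r] ((X - C c) ^ s * G)).eval c = 0 := by
  intro r
  induction r with
  | zero =>
    intro s G hs
    simp only [Function.iterate_zero, id, eval_mul, eval_pow, eval_sub, eval_X, eval_C,
      sub_self]
    rw [zero_pow (by omega), zero_mul]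
  | succ r ih =>
    intro s G hs
    obtain ⟨s', rfl⟩ : ∃ s', s = s' + 1 := ⟨s - 1, by omega⟩
    rw [Function.iterate_succ_apply]
    have : Polynomial.derivative ((X - C c) ^ (s' + 1) * G)
        = (X - C c) ^ s' * (C ((s' : ℂ) + 1) * G + (X - C c) * Polynomial.derivative G) := by
      rw [derivative_mul, derivative_pow]
      simp only [derivative_sub, derivative_X, derivative_C, sub_zero, mul_one,
        Nat.add_sub_cancel, Nat.cast_add, Nat.cast_one]
      ring
    rw [this]
    exact ih s' _ (by omega)

lemma iterDerivTermEval (b c : ℂ) (t r : ℕ) (hc : c ≠ 0) :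
    (Polynomial.derivative^[r] (C b * X ^ t)).eval c
      = b * (t.descFactorial r : ℂ) * c ^ t * (c⁻¹) ^ r := by
  rw [Polynomial.iterate_derivative_C_mul, Polynomial.iterate_derivative_X_pow_eq_C_mul]
  simp only [eval_mul, eval_C, eval_pow, eval_X]
  rcases le_or_gt r t with h | h
  · rw [pow_sub₀ c hc h, ← inv_pow]
    ring
  · rw [Nat.descFactorial_eq_zero_iff_lt.mpr h]
    simp

lemma rootSum (M : ℕ) (ζ : ℂ) (h : ζ ^ M = 1) :
    ∑ j ∈ range M, ζ ^ j = if ζ = 1 then (M : ℂ) else 0 := by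
  split_ifs with h1
  · simp [h1]
  · rw [geom_sum_eq h1, h]
    simp

lemma spanDesc : ∀ (R : ℕ) (e : ℂ[X]), e.natDegree ≤ R →
    ∃ c : ℕ → ℂ, e = ∑ r ∈ range (R + 1), C (c r) * descPochhammer ℂ r := by
  intro R
  induction R with
  | zero =>
    intro e he
    refine ⟨fun _ => e.coeff 0, ?_⟩
    rw [Polynomial.eq_C_of_natDegree_le_zero he]
    simp
  | succ R ih =>
    intro e he
    set q : ℂ[X] := C (e.coeff (R + 1)) * descPochhammer ℂ (R + 1) with hq
    have hdq : q.natDegree ≤ R + 1 := by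
      refine le_trans (Polynomial.natDegree_C_mul_le _ _) ?_
      rw [descPochhammer_natDegree]
    have hqc : q.coeff (R + 1) = e.coeff (R + 1) := by
      rw [hq, Polynomial.coeff_C_mul]
      have : (descPochhammer ℂ (R + 1)).coeff (R + 1) = 1 := by
        have hm := monic_descPochhammer ℂ (R + 1)
        have hd := descPochhammer_natDegree ℂ (R + 1)
        simpa [Polynomial.Monic, Polynomial.leadingCoeff, hd] using hm
      rw [this, mul_one]
    have he' : (e - q).natDegree ≤ R := by
      apply Polynomial.natDegree_le_iff_coeff_eq_zero.mpr
      intro mm hmm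
      rw [Polynomial.coeff_sub]
      rcases eq_or_lt_of_le (Nat.succ_le_of_lt hmm) with h1 | h1
      · rw [← h1, hqc, sub_self]
      · rw [Polynomial.coeff_eq_zero_of_natDegree_lt (lt_of_le_of_lt he h1),
          Polynomial.coeff_eq_zero_of_natDegree_lt (lt_of_le_of_lt hdq h1), sub_self]
    obtain ⟨c, hc⟩ := ih (e - q) he'
    refine ⟨fun r => if r = R + 1 then e.coeff (R + 1) else c r, ?_⟩
    rw [Finset.sum_range_succ]
    have : ∑ r ∈ range (R + 1),
        C (if r = R + 1 then e.coeff (R + 1) else c r) * descPochhammer ℂ r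
        = ∑ r ∈ range (R + 1), C (c r) * descPochhammer ℂ r := by
      apply Finset.sum_congr rfl
      intro r hr
      rw [if_neg (by simp at hr; omega)]
    rw [this, ← hc]
    simp [hq]

lemma cardClass (d M ℓ : ℕ) (hM : 0 < M) :
    ((range (d + 1)).filter (fun k => k % M = ℓ % M)).card ≤ d / M + 1 := by
  have := Finset.card_le_card_of_injOn (fun k => k / M) (s := (range (d + 1)).filter (fun k => k % M = ℓ % M)) (t := range (d / M + 1)) ?_ ?_
  · simpa using this
  · intro k hk
    simp only [coe_filter, Set.mem_setOf_eq, mem_filter, mem_range] at hk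
    simp only [mem_coe, mem_range]
    have : k / M ≤ d / M := Nat.div_le_div_right (by omega)
    omega
  · intro k1 h1 k2 h2 hel
    simp only [coe_filter, Set.mem_setOf_eq, mem_range] at h1 h2
    obtain ⟨-, hm1⟩ := h1
    obtain ⟨-, hm2⟩ := h2
    simp only at hel
    have e1 := Nat.div_add_mod k1 M
    have e2 := Nat.div_add_mod k2 M
    rw [← hel] at e2
    have hmm : k1 % M = k2 % M := by rw [hm1, hm2]
    omega

lemma natDegree_le_of_degree_lt {e : ℂ[X]} {D : ℕ} (h : e.degree < (D + 1 : ℕ)) :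
    e.natDegree ≤ D := by
  by_cases h0 : e = 0
  · simp [h0]
  · have := (Polynomial.natDegree_lt_iff_degree_lt h0).mpr h
    omega

lemma killLemma (a : ℕ → ℂ) (d : ℕ) (K : Finset ℕ) (Dg : ℕ)
    (hKle : ∀ k ∈ K, k ≤ d)
    (hcross : ∀ k₁ ∈ K, ∀ k₂ ∈ K, d - k₂ ≠ k₁)
    (hcard : 2 * K.card ≤ Dg + 1)
    (hfun : ∀ e : ℂ[X], e.natDegree ≤ Dg →
      ∑ k ∈ K, a k * (e.eval ((d - k : ℕ) : ℂ) - e.eval (k : ℂ)) = 0) :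
    ∀ k₀ ∈ K, a k₀ = 0 := by
  intro k₀ hk₀
  set s : Finset ℕ := K ∪ K.image (fun k => d - k) with hs
  have hinj : Set.InjOn (Nat.cast : ℕ → ℂ) s := fun x _ y _ h => Nat.cast_injective h
  set e : ℂ[X] := Lagrange.interpolate s (Nat.cast : ℕ → ℂ)
    (fun i => if i = d - k₀ then 1 else 0) with he
  have hdeg : e.natDegree ≤ Dg := by
    apply natDegree_le_of_degree_lt
    refine lt_of_lt_of_le (Lagrange.degree_interpolate_lt _ hinj) ?_
    have : s.card ≤ 2 * K.card := by
      refine le_trans (Finset.card_union_le _ _) ?_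
      have := Finset.card_image_le (s := K) (f := fun k => d - k)
      omega
    exact_mod_cast Nat.cast_le.mpr (le_trans this hcard)
  have hsum := hfun e hdeg
  have heval : ∀ k ∈ K, e.eval ((d - k : ℕ) : ℂ) - e.eval (k : ℂ)
      = if k = k₀ then 1 else 0 := by
    intro k hk
    have h1 : e.eval ((d - k : ℕ) : ℂ) = if d - k = d - k₀ then 1 else 0 := by
      rw [he]
      exact Lagrange.eval_interpolate_at_node _ hinj
        (Finset.mem_union_right _ (Finset.mem_image_of_mem _ hk))
    have h2 : e.eval ((k : ℕ) : ℂ) = 0 := by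
      rw [he]
      rw [Lagrange.eval_interpolate_at_node _ hinj (Finset.mem_union_left _ hk)]
      exact if_neg (fun hcon => hcross k hk k₀ hk₀ hcon.symm)
    rw [h1, h2, sub_zero]
    congr 1
    have hk1 := hKle k hk
    have hk2 := hKle k₀ hk₀
    simp only [eq_iff_iff]
    omega
  rw [Finset.sum_congr rfl (fun k hk => by rw [heval k hk])] at hsum
  simp only [mul_ite, mul_one, mul_zero] at hsum
  rwa [Finset.sum_ite_eq' K k₀ a, if_pos hk₀] at hsum

lemma symLemma (a : ℕ → ℂ) (d : ℕ) (K : Finset ℕ) (Dg : ℕ)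
    (hKle : ∀ k ∈ K, k ≤ d)
    (hsym : ∀ k ∈ K, d - k ∈ K)
    (hcard : K.card ≤ Dg + 1)
    (hfun : ∀ e : ℂ[X], e.natDegree ≤ Dg →
      ∑ k ∈ K, a k * (e.eval ((d - k : ℕ) : ℂ) - e.eval (k : ℂ)) = 0) :
    ∀ k₀ ∈ K, a (d - k₀) = a k₀ := by
  intro k₀ hk₀
  have hinj : Set.InjOn (Nat.cast : ℕ → ℂ) K := fun x _ y _ h => Nat.cast_injective h
  set e : ℂ[X] := Lagrange.interpolate K (Nat.cast : ℕ → ℂ)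
    (fun i => if i = k₀ then 1 else 0) with he
  have hdeg : e.natDegree ≤ Dg := by
    apply natDegree_le_of_degree_lt
    refine lt_of_lt_of_le (Lagrange.degree_interpolate_lt _ hinj) ?_
    exact_mod_cast Nat.cast_le.mpr hcard
  have hsum := hfun e hdeg
  have heval : ∀ k ∈ K, a k * (e.eval ((d - k : ℕ) : ℂ) - e.eval (k : ℂ))
      = (if k = d - k₀ then a k else 0) - (if k = k₀ then a k else 0) := by
    intro k hk
    have h1 : e.eval ((d - k : ℕ) : ℂ) = if d - k = k₀ then 1 else 0 := by
      rw [he]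
      exact Lagrange.eval_interpolate_at_node _ hinj (hsym k hk)
    have h2 : e.eval ((k : ℕ) : ℂ) = if k = k₀ then 1 else 0 := by
      rw [he]
      exact Lagrange.eval_interpolate_at_node _ hinj hk
    rw [h1, h2]
    have hk1 := hKle k hk
    have hk2 := hKle k₀ hk₀
    have : (d - k = k₀) ↔ (k = d - k₀) := by omega
    simp only [this]
    split_ifs <;> ring
  rw [Finset.sum_congr rfl heval, Finset.sum_sub_distrib,
    Finset.sum_ite_eq' K (d - k₀) a, Finset.sum_ite_eq' K k₀ a,
    if_pos (hsym k₀ hk₀), if_pos hk₀] at hsum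
  linear_combination hsum

end PolyHelpers



open MvPolynomial Finset

noncomputable section

/-- The polynomial ring `R = ℂ[z,w]`. -/
abbrev R2 : Type := MvPolynomial (Fin 2) ℂ

/-- `z`, the first variable. -/
def zP : R2 := X 0

/-- `w`, the second variable (playing the role of `z̄`). -/
def wP : R2 := X 1

/-- `ε = exp(πi/N)`, a primitive `2N`-th root of unity. -/
def eps (N : ℕ) : ℂ := Complex.exp ((Real.pi : ℂ) * Complex.I / (N : ℂ))

/-- The reflection `σⱼ : z ↦ ε^j w, w ↦ ε^{-j} z` as a `ℂ`-algebra endomorphism. -/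
def dihRefl (N j : ℕ) : R2 →ₐ[ℂ] R2 :=
  aeval (fun k : Fin 2 => if k = 0 then C (eps N ^ j) * X 1 else C (eps N ^ (-(j : ℤ))) * X 0)

/-- The multiplicity `mⱼ`: `m` for even `j`, `n` for odd `j`. -/
def mult (m n j : ℕ) : ℕ := if Even j then m else n

/-- Quasi-invariance for the dihedral system `I₂(2N)` with multiplicities `(m,n)`. -/
def IsQuasiInv (N m n : ℕ) (p : R2) : Prop :=
  ∀ j < 2 * N, (zP - C (eps N ^ j) * wP) ^ (2 * mult m n j + 1) ∣ dihRefl N j p - p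

lemma eps_prim (N : ℕ) (hN : 1 ≤ N) : IsPrimitiveRoot (eps N) (2 * N) := by
  have h := Complex.isPrimitiveRoot_exp (2 * N) (by omega)
  have : (2 * (Real.pi : ℂ) * Complex.I / (2 * N : ℕ)) = (Real.pi : ℂ) * Complex.I / N := by
    have hN0 : (N : ℂ) ≠ 0 := Nat.cast_ne_zero.mpr (by omega)
    push_cast
    field_simp
  rwa [this] at h

lemma eps_ne_zero (N : ℕ) : eps N ≠ 0 := Complex.exp_ne_zero _

lemma fin2_decomp (u : Fin 2 →₀ ℕ) : u = Finsupp.single 0 (u 0) + Finsupp.single 1 (u 1) := by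
  ext i
  fin_cases i <;> simp

lemma fin2_degree (u : Fin 2 →₀ ℕ) : u.degree = u 0 + u 1 := by
  have : u.degree = ∑ i : Fin 2, u i := by
    refine Finset.sum_subset (Finset.subset_univ _) ?_
    intro i _ hi
    exact Finsupp.notMem_support_iff.mp hi
  rw [this, Fin.sum_univ_two]

lemma monomial_eq_CXX (k t : ℕ) (c : ℂ) :
    monomial (Finsupp.single (0 : Fin 2) k + Finsupp.single 1 t) c = C c * X 0 ^ k * X 1 ^ t := by
  rw [X_pow_eq_monomial, X_pow_eq_monomial, mul_assoc, monomial_mul, C_mul_monomial]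
  simp

lemma homog_expand (p : R2) (d : ℕ) (hhom : p.IsHomogeneous d) :
    p = ∑ k ∈ range (d + 1), monomial (Finsupp.single 0 k + Finsupp.single 1 (d - k))
      (coeff (Finsupp.single 0 k + Finsupp.single 1 (d - k)) p) := by
  apply MvPolynomial.ext
  intro u
  rw [MvPolynomial.coeff_sum]
  simp only [coeff_monomial]
  by_cases h : u 0 + u 1 = d
  · rw [Finset.sum_eq_single (u 0)]
    · have hu : (Finsupp.single (0 : Fin 2) (u 0) + Finsupp.single 1 (d - u 0)) = u := by
        rw [show d - u 0 = u 1 by omega]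
        exact (fin2_decomp u).symm
      rw [if_pos hu, hu]
    · intro k hk hne
      rw [if_neg]
      intro hcon
      apply hne
      have h0 := DFunLike.congr_fun hcon 0
      simpa using h0
    · intro hnot
      exfalso
      exact hnot (mem_range.mpr (by omega))
  · have hz : coeff u p = 0 := hhom.coeff_eq_zero (by rw [fin2_degree]; exact h)
    rw [hz]
    symm
    apply Finset.sum_eq_zero
    intro k hk
    rw [if_neg]
    intro hcon
    apply h
    have h0 := DFunLike.congr_fun hcon 0
    have h1 := DFunLike.congr_fun hcon 1
    simp only [Finsupp.add_apply, Finsupp.single_apply] at h0 h1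
    simp only [mem_range] at hk
    norm_num at h0 h1
    omega

lemma dihRefl_monomial (N j : ℕ) (k t : ℕ) (c : ℂ) :
    dihRefl N j (monomial (Finsupp.single 0 k + Finsupp.single 1 t) c)
      = monomial (Finsupp.single 0 t + Finsupp.single 1 k)
          (c * (eps N ^ j) ^ k * ((eps N ^ j)⁻¹) ^ t) := by
  rw [monomial_eq_CXX, monomial_eq_CXX]
  rw [map_mul, map_mul, map_pow, map_pow]
  rw [show dihRefl N j (C c) = C c from aeval_C _ _]
  rw [show dihRefl N j (X 0) = C (eps N ^ j) * X 1 from by simp [dihRefl]]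
  rw [show dihRefl N j (X 1) = C ((eps N ^ j)⁻¹) * X 0 from by
    simp [dihRefl, zpow_neg, zpow_natCast]]
  simp only [C_mul, C_pow, mul_pow, ← pow_mul]
  ring

/-- dehomogenization map -/
def phiD : R2 →ₐ[ℂ] Polynomial ℂ :=
  aeval (fun i : Fin 2 => if i = 0 then Polynomial.X else 1)

lemma phiD_monomial (k t : ℕ) (c : ℂ) :
    phiD (monomial (Finsupp.single 0 k + Finsupp.single 1 t) c)
      = Polynomial.C c * Polynomial.X ^ k := by
  rw [monomial_eq_CXX, map_mul, map_mul, map_pow, map_pow]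
  rw [show phiD (C c) = Polynomial.C c from aeval_C _ _]
  rw [show phiD (X 0) = Polynomial.X from by simp [phiD]]
  rw [show phiD (X 1) = 1 from by simp [phiD]]
  simp

lemma phiD_lin (c : ℂ) : phiD (zP - C c * wP) = Polynomial.X - Polynomial.C c := by
  rw [map_sub, map_mul]
  rw [show phiD (C c) = Polynomial.C c from aeval_C _ _]
  rw [show phiD zP = Polynomial.X from by simp [phiD, zP]]
  rw [show phiD wP = 1 from by simp [phiD, wP]]
  rw [mul_one]

lemma modsplit (N : ℕ) (hN : 1 ≤ N) (x y : ℕ) :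
    x % N = y % N ↔ (x % (2*N) = y % (2*N) ∨ x % (2*N) = (y+N) % (2*N)) := by
  constructor
  · intro h
    have h' : (N : ℤ) ∣ (y : ℤ) - x := (Nat.modEq_iff_dvd (n := N)).mp h
    obtain ⟨t, ht⟩ := h'
    rcases Int.even_or_odd t with ⟨s, hs⟩ | ⟨s, hs⟩
    · left
      apply (Nat.modEq_iff_dvd (n := 2*N)).mpr
      refine ⟨s, ?_⟩
      push_cast
      rw [hs] at ht
      linarith
    · right
      apply (Nat.modEq_iff_dvd (n := 2*N)).mpr
      refine ⟨s + 1, ?_⟩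
      push_cast
      rw [hs] at ht
      linarith
  · intro h
    rcases h with h | h
    · have h' := (Nat.modEq_iff_dvd (n := 2*N)).mp h
      obtain ⟨t, ht⟩ := h'
      apply (Nat.modEq_iff_dvd (n := N)).mpr
      exact ⟨2*t, by push_cast at ht ⊢; linarith⟩
    · have h' := (Nat.modEq_iff_dvd (n := 2*N)).mp h
      obtain ⟨t, ht⟩ := h'
      apply (Nat.modEq_iff_dvd (n := N)).mpr
      refine ⟨2*t - 1, ?_⟩
      push_cast at ht ⊢
      linarith

theorem lowDegree_quasiInvariant_is_invariant (N m n : ℕ) (hN : 1 ≤ N) (hmn : n < m)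
    (p : R2) (d : ℕ) (hhom : p.IsHomogeneous d) (hd : d < (2 * n + 1) * N)
    (hp : IsQuasiInv N m n p) :
    ∀ j < 2 * N, dihRefl N j p = p := by
  have hprim : IsPrimitiveRoot (eps N) (2 * N) := eps_prim N hN
  have hord : orderOf (eps N) = 2 * N := (hprim.eq_orderOf).symm
  have hε0 : eps N ≠ 0 := eps_ne_zero N
  set ε : ℂ := eps N with hεdef
  set a : ℕ → ℂ := fun k => coeff (Finsupp.single 0 k + Finsupp.single 1 (d - k)) p with ha
  have hpex : p = ∑ k ∈ range (d + 1),
      monomial (Finsupp.single 0 k + Finsupp.single 1 (d - k)) (a k) := homog_expand p d hhom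
  have hmodeq' : ∀ x y : ℕ, y ≤ x → (ε ^ x = ε ^ y ↔ x % (2*N) = y % (2*N)) := by
    intro x y hxy
    have h1 : ε ^ x = ε ^ (x - y) * ε ^ y := by rw [← pow_add]; congr 1; omega
    have h2 : ε ^ x = ε ^ y ↔ ε ^ (x - y) = 1 := by
      rw [h1]
      constructor
      · intro h
        have := mul_right_cancel₀ (pow_ne_zero y hε0) (h.trans (one_mul (ε ^ y)).symm)
        exact this
      · intro h
        rw [h, one_mul]
    rw [h2, hprim.pow_eq_one_iff_dvd]
    rw [← Nat.modEq_iff_dvd' hxy]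
    exact ⟨fun h => h.symm, fun h => h.symm⟩
  have hmodeq : ∀ x y : ℕ, ε ^ x = ε ^ y ↔ x % (2*N) = y % (2*N) := by
    intro x y
    rcases le_total y x with h | h
    · exact hmodeq' x y h
    · have := hmodeq' y x h
      constructor
      · intro hh
        exact (this.mp hh.symm).symm
      · intro hh
        exact (this.mpr hh.symm).symm
  set Dr : ℕ → ℕ → ℂ :=
    fun r k => (((d - k).descFactorial r : ℂ) - (k.descFactorial r : ℂ)) with hDrdef
  -- Step 1: derivative conditions
  have hE : ∀ j, j < 2 * N → ∀ r, r ≤ 2 * mult m n j →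
      ∑ k ∈ range (d + 1), a k * (ε ^ j) ^ k * Dr r k = 0 := by
    intro j hj r hr
    have hζ0 : (ε : ℂ) ^ j ≠ 0 := pow_ne_zero _ hε0
    obtain ⟨G, hG⟩ := map_dvd phiD (hp j hj)
    rw [map_pow, phiD_lin] at hG
    have h0 : (Polynomial.derivative^[r] (phiD (dihRefl N j p) - phiD p)).eval (ε ^ j) = 0 := by
      rw [show phiD (dihRefl N j p) - phiD p = phiD (dihRefl N j p - p) from (map_sub _ _ _).symm,
        hG]
      exact iterDerivEvalZero (ε ^ j) r (2 * mult m n j + 1) G (by omega)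
    have hφp : phiD p = ∑ k ∈ range (d + 1), Polynomial.C (a k) * Polynomial.X ^ k := by
      conv_lhs => rw [hpex]
      rw [map_sum]
      exact Finset.sum_congr rfl fun k _ => phiD_monomial _ _ _
    have hφσ : phiD (dihRefl N j p) = ∑ k ∈ range (d + 1),
        Polynomial.C (a k * (ε ^ j) ^ k * ((ε ^ j)⁻¹) ^ (d - k)) * Polynomial.X ^ (d - k) := by
      conv_lhs => rw [hpex]
      rw [map_sum, map_sum]
      exact Finset.sum_congr rfl fun k _ => by rw [dihRefl_monomial, phiD_monomial]
    rw [hφσ, hφp, Polynomial.iterate_derivative_sub, Polynomial.iterate_derivative_sum,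
      Polynomial.iterate_derivative_sum, Polynomial.eval_sub, Polynomial.eval_finset_sum,
      Polynomial.eval_finset_sum] at h0
    have h1 : ∑ k ∈ range (d+1),
        ((Polynomial.derivative^[r] (Polynomial.C (a k * (ε ^ j) ^ k * ((ε ^ j)⁻¹) ^ (d - k)) *
          Polynomial.X ^ (d - k))).eval (ε ^ j)
        - (Polynomial.derivative^[r] (Polynomial.C (a k) * Polynomial.X ^ k)).eval (ε ^ j))
        = ∑ k ∈ range (d+1), (a k * (ε^j)^k * Dr r k) * ((ε^j)⁻¹)^r := by
      refine Finset.sum_congr rfl fun k _ => ?_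
      rw [iterDerivTermEval _ _ _ _ hζ0, iterDerivTermEval _ _ _ _ hζ0]
      have hcan : ((ε^j)⁻¹) ^ (d-k) * (ε^j)^(d-k) = 1 := by
        rw [← mul_pow, inv_mul_cancel₀ hζ0, one_pow]
      rw [hDrdef]
      simp only []
      linear_combination (a k * ((ε^j)^k) * ((d-k).descFactorial r : ℂ) * ((ε^j)⁻¹)^r) * hcan
    rw [← Finset.sum_sub_distrib, h1, ← Finset.sum_mul] at h0
    rcases mul_eq_zero.mp h0 with h | h
    · exact h
    · exact absurd h (pow_ne_zero _ (inv_ne_zero hζ0))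
  -- Step 2: class sums mod 2N
  have hC1 : ∀ ℓ r : ℕ, r ≤ 2*n →
      ∑ k ∈ (range (d+1)).filter (fun k => k % (2*N) = ℓ % (2*N)), a k * Dr r k = 0 := by
    intro ℓ r hr
    have step1 : ∑ j ∈ range (2*N),
        (∑ k ∈ range (d + 1), a k * (ε ^ j) ^ k * Dr r k) * ((ε^ℓ)⁻¹)^j = 0 :=
      Finset.sum_eq_zero fun j hj => by
        rw [hE j (mem_range.mp hj) r (le_trans hr (by unfold mult; split <;> omega)), zero_mul]
    have hζ1 : ∀ k : ℕ, (ε^k * (ε^ℓ)⁻¹)^(2*N) = 1 := by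
      intro k
      rw [mul_pow, inv_pow, pow_right_comm ε k, pow_right_comm ε ℓ, hprim.pow_eq_one,
        one_pow, one_pow, inv_one, mul_one]
    have step2 : ∑ j ∈ range (2*N),
        (∑ k ∈ range (d + 1), a k * (ε ^ j) ^ k * Dr r k) * ((ε^ℓ)⁻¹)^j
        = ∑ k ∈ range (d+1), (a k * Dr r k) *
            (if k % (2*N) = ℓ % (2*N) then ((2*N : ℕ) : ℂ) else 0) := by
      calc ∑ j ∈ range (2*N), (∑ k ∈ range (d + 1), a k * (ε ^ j) ^ k * Dr r k) * ((ε^ℓ)⁻¹)^j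
          = ∑ j ∈ range (2*N), ∑ k ∈ range (d+1), (a k * Dr r k) * (ε^k * (ε^ℓ)⁻¹)^j := by
            refine Finset.sum_congr rfl fun j _ => ?_
            rw [Finset.sum_mul]
            refine Finset.sum_congr rfl fun k _ => ?_
            rw [mul_pow, pow_right_comm ε j k]
            ring
        _ = ∑ k ∈ range (d+1), ∑ j ∈ range (2*N), (a k * Dr r k) * (ε^k * (ε^ℓ)⁻¹)^j :=
            Finset.sum_comm
        _ = ∑ k ∈ range (d+1), (a k * Dr r k) * ∑ j ∈ range (2*N), (ε^k * (ε^ℓ)⁻¹)^j := by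
            exact Finset.sum_congr rfl fun k _ => (Finset.mul_sum _ _ _).symm
        _ = _ := by
            refine Finset.sum_congr rfl fun k _ => ?_
            rw [rootSum (2*N) _ (hζ1 k)]
            congr 1
            have hiff : (ε^k * (ε^ℓ)⁻¹ = 1) ↔ (k % (2*N) = ℓ % (2*N)) := by
              rw [mul_inv_eq_one₀ (pow_ne_zero _ hε0)]
              exact hmodeq k ℓ
            exact if_congr hiff rfl rfl
    rw [step2] at step1
    have step3 : ∑ k ∈ range (d+1), (a k * Dr r k) *
        (if k % (2*N) = ℓ % (2*N) then ((2*N : ℕ) : ℂ) else 0)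
        = (∑ k ∈ (range (d+1)).filter (fun k => k % (2*N) = ℓ % (2*N)), a k * Dr r k)
           * ((2*N : ℕ) : ℂ) := by
      rw [Finset.sum_mul, Finset.sum_filter]
      refine Finset.sum_congr rfl fun k _ => ?_
      split_ifs <;> ring
    rw [step3] at step1
    rcases mul_eq_zero.mp step1 with h | h
    · exact h
    · exfalso
      have : ((2*N : ℕ) : ℂ) ≠ 0 := Nat.cast_ne_zero.mpr (by omega)
      exact this h
  -- Step 2': class sums mod N
  have hC2 : ∀ ℓ r : ℕ, r ≤ 2*m →
      ∑ k ∈ (range (d+1)).filter (fun k => k % N = ℓ % N), a k * Dr r k = 0 := by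
    intro ℓ r hr
    have hEm : ∀ u, u < N → ∑ k ∈ range (d + 1), a k * (ε ^ (2*u)) ^ k * Dr r k = 0 := by
      intro u hu
      refine hE (2*u) (by omega) r ?_
      have : mult m n (2*u) = m := by unfold mult; rw [if_pos ⟨u, by ring⟩]
      omega
    have step1 : ∑ u ∈ range N,
        (∑ k ∈ range (d + 1), a k * (ε ^ (2*u)) ^ k * Dr r k) * ((ε^(2*ℓ))⁻¹)^u = 0 :=
      Finset.sum_eq_zero fun u hu => by rw [hEm u (mem_range.mp hu), zero_mul]
    have hζ1 : ∀ k : ℕ, (ε^(2*k) * (ε^(2*ℓ))⁻¹)^N = 1 := by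
      intro k
      have e1 : ∀ t : ℕ, ε ^ (2*t*N) = 1 := by
        intro t
        rw [show 2*t*N = 2*N*t from by ring, pow_mul, hprim.pow_eq_one, one_pow]
      rw [mul_pow, inv_pow, ← pow_mul, ← pow_mul, e1 k, e1 ℓ, inv_one, mul_one]
    have hmodN : ∀ k : ℕ, (ε^(2*k) = ε^(2*ℓ)) ↔ k % N = ℓ % N := by
      intro k
      rw [hmodeq, Nat.mul_mod_mul_left, Nat.mul_mod_mul_left]
      omega
    have step2 : ∑ u ∈ range N,
        (∑ k ∈ range (d + 1), a k * (ε ^ (2*u)) ^ k * Dr r k) * ((ε^(2*ℓ))⁻¹)^u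
        = ∑ k ∈ range (d+1), (a k * Dr r k) *
            (if k % N = ℓ % N then ((N : ℕ) : ℂ) else 0) := by
      calc ∑ u ∈ range N, (∑ k ∈ range (d + 1), a k * (ε ^ (2*u)) ^ k * Dr r k) * ((ε^(2*ℓ))⁻¹)^u
          = ∑ u ∈ range N, ∑ k ∈ range (d+1), (a k * Dr r k) * (ε^(2*k) * (ε^(2*ℓ))⁻¹)^u := by
            refine Finset.sum_congr rfl fun u _ => ?_
            rw [Finset.sum_mul]
            refine Finset.sum_congr rfl fun k _ => ?_
            rw [mul_pow, ← pow_mul, show 2*u*k = 2*k*u from by ring, pow_mul]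
            ring
        _ = ∑ k ∈ range (d+1), ∑ u ∈ range N, (a k * Dr r k) * (ε^(2*k) * (ε^(2*ℓ))⁻¹)^u :=
            Finset.sum_comm
        _ = ∑ k ∈ range (d+1), (a k * Dr r k) * ∑ u ∈ range N, (ε^(2*k) * (ε^(2*ℓ))⁻¹)^u := by
            exact Finset.sum_congr rfl fun k _ => (Finset.mul_sum _ _ _).symm
        _ = _ := by
            refine Finset.sum_congr rfl fun k _ => ?_
            rw [rootSum N _ (hζ1 k)]
            congr 1
            have hiff : (ε^(2*k) * (ε^(2*ℓ))⁻¹ = 1) ↔ (k % N = ℓ % N) := by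
              rw [mul_inv_eq_one₀ (pow_ne_zero _ hε0)]
              exact hmodN k
            exact if_congr hiff rfl rfl
    rw [step2] at step1
    have step3 : ∑ k ∈ range (d+1), (a k * Dr r k) *
        (if k % N = ℓ % N then ((N : ℕ) : ℂ) else 0)
        = (∑ k ∈ (range (d+1)).filter (fun k => k % N = ℓ % N), a k * Dr r k)
           * ((N : ℕ) : ℂ) := by
      rw [Finset.sum_mul, Finset.sum_filter]
      refine Finset.sum_congr rfl fun k _ => ?_
      split_ifs <;> ring
    rw [step3] at step1
    rcases mul_eq_zero.mp step1 with h | h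
    · exact h
    · exact absurd h (Nat.cast_ne_zero.mpr (by omega))
  -- Step 3: polynomial versions
  have hP1 : ∀ ℓ : ℕ, ∀ e : Polynomial ℂ, e.natDegree ≤ 2*n →
      ∑ k ∈ (range (d+1)).filter (fun k => k % (2*N) = ℓ % (2*N)),
        a k * (e.eval (((d - k : ℕ)) : ℂ) - e.eval ((k : ℕ) : ℂ)) = 0 := by
    intro ℓ e he
    obtain ⟨c, hc⟩ := spanDesc (2*n) e he
    have heval : ∀ x : ℕ, e.eval ((x : ℕ) : ℂ)
        = ∑ r ∈ range (2*n+1), c r * (x.descFactorial r : ℂ) := by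
      intro x
      rw [hc, Polynomial.eval_finset_sum]
      refine Finset.sum_congr rfl fun r _ => ?_
      rw [Polynomial.eval_mul, Polynomial.eval_C, descPochhammer_eval_eq_descFactorial]
    calc ∑ k ∈ (range (d+1)).filter (fun k => k % (2*N) = ℓ % (2*N)),
          a k * (e.eval (((d - k : ℕ)) : ℂ) - e.eval ((k : ℕ) : ℂ))
        = ∑ k ∈ (range (d+1)).filter (fun k => k % (2*N) = ℓ % (2*N)),
            ∑ r ∈ range (2*n+1), c r * (a k * Dr r k) := by
          refine Finset.sum_congr rfl fun k _ => ?_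
          rw [heval, heval, ← Finset.sum_sub_distrib, Finset.mul_sum]
          refine Finset.sum_congr rfl fun r _ => ?_
          rw [hDrdef]
          ring
      _ = ∑ r ∈ range (2*n+1), c r *
            ∑ k ∈ (range (d+1)).filter (fun k => k % (2*N) = ℓ % (2*N)), a k * Dr r k := by
          rw [Finset.sum_comm]
          exact Finset.sum_congr rfl fun r _ => (Finset.mul_sum _ _ _).symm
      _ = 0 := by
          refine Finset.sum_eq_zero fun r hr => ?_
          rw [hC1 ℓ r (by simp only [mem_range] at hr; omega), mul_zero]
  have hP2 : ∀ ℓ : ℕ, ∀ e : Polynomial ℂ, e.natDegree ≤ 2*m →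
      ∑ k ∈ (range (d+1)).filter (fun k => k % N = ℓ % N),
        a k * (e.eval (((d - k : ℕ)) : ℂ) - e.eval ((k : ℕ) : ℂ)) = 0 := by
    intro ℓ e he
    obtain ⟨c, hc⟩ := spanDesc (2*m) e he
    have heval : ∀ x : ℕ, e.eval ((x : ℕ) : ℂ)
        = ∑ r ∈ range (2*m+1), c r * (x.descFactorial r : ℂ) := by
      intro x
      rw [hc, Polynomial.eval_finset_sum]
      refine Finset.sum_congr rfl fun r _ => ?_
      rw [Polynomial.eval_mul, Polynomial.eval_C, descPochhammer_eval_eq_descFactorial]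
    calc ∑ k ∈ (range (d+1)).filter (fun k => k % N = ℓ % N),
          a k * (e.eval (((d - k : ℕ)) : ℂ) - e.eval ((k : ℕ) : ℂ))
        = ∑ k ∈ (range (d+1)).filter (fun k => k % N = ℓ % N),
            ∑ r ∈ range (2*m+1), c r * (a k * Dr r k) := by
          refine Finset.sum_congr rfl fun k _ => ?_
          rw [heval, heval, ← Finset.sum_sub_distrib, Finset.mul_sum]
          refine Finset.sum_congr rfl fun r _ => ?_
          rw [hDrdef]
          ring
      _ = ∑ r ∈ range (2*m+1), c r *
            ∑ k ∈ (range (d+1)).filter (fun k => k % N = ℓ % N), a k * Dr r k := by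
          rw [Finset.sum_comm]
          exact Finset.sum_congr rfl fun r _ => (Finset.mul_sum _ _ _).symm
      _ = 0 := by
          refine Finset.sum_eq_zero fun r hr => ?_
          rw [hC2 ℓ r (by simp only [mem_range] at hr; omega), mul_zero]
  -- Step 4: cardinality bounds
  have hcard2N : ∀ ℓ : ℕ, ((range (d+1)).filter (fun k => k % (2*N) = ℓ % (2*N))).card ≤ n + 1 := by
    intro ℓ
    refine le_trans (cardClass d (2*N) ℓ (by omega)) ?_
    have : d / (2*N) ≤ n := by
      have h2 : d < (n+1) * (2*N) := by nlinarith
      have := (Nat.div_lt_iff_lt_mul (show 0 < 2*N by omega)).mpr h2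
      omega
    omega
  have hcardN : ∀ ℓ : ℕ, ((range (d+1)).filter (fun k => k % N = ℓ % N)).card ≤ 2*n + 1 := by
    intro ℓ
    refine le_trans (cardClass d N ℓ (by omega)) ?_
    have : d / N ≤ 2*n := by
      have h2 : d < (2*n+1) * N := hd
      have := (Nat.div_lt_iff_lt_mul (show 0 < N by omega)).mpr h2
      omega
    omega
  -- class membership facts
  have hKle : ∀ (M ℓ : ℕ), ∀ k ∈ (range (d+1)).filter (fun k => k % M = ℓ % M), k ≤ d := by
    intro M ℓ k hk
    simp only [mem_filter, mem_range] at hk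
    omega
  -- Step 5: case A
  have hA : ∀ k, k ≤ d → (2*k) % (2*N) = d % (2*N) → a (d - k) = a k := by
    intro k hk hmod
    set K := (range (d+1)).filter (fun x => x % (2*N) = k % (2*N)) with hK
    have hkK : k ∈ K := by
      rw [hK]
      simp only [mem_filter, mem_range]
      exact ⟨by omega, trivial⟩
    refine symLemma a d K (2*n) (hKle (2*N) k) ?_ ?_ (hP1 k) k hkK
    · intro k' hk'
      rw [hK] at hk' ⊢
      simp only [mem_filter, mem_range] at hk' ⊢
      obtain ⟨hk'1, hk'2⟩ := hk'
      refine ⟨by omega, ?_⟩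
      have h2 : Nat.ModEq (2*N) k' k := hk'2
      have h3 : Nat.ModEq (2*N) (2*k) d := hmod
      have h4 : Nat.ModEq (2*N) ((d - k') + k') (k + k) := by
        rw [show (d - k') + k' = d from by omega, show k + k = 2*k from by ring]
        exact h3.symm
      have h5 : Nat.ModEq (2*N) (k + k) (k + k') := Nat.ModEq.add_left k h2.symm
      exact Nat.ModEq.add_right_cancel' k' (h4.trans h5)
    · have hcc := hcard2N k
      rw [← hK] at hcc
      omega
  -- Step 6: case B
  have hB : ∀ k, k ≤ d → ¬ ((2*k) % (2*N) = d % (2*N)) → a k = 0 := by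
    intro k hk hmod
    set K1 := (range (d+1)).filter (fun x => x % (2*N) = k % (2*N)) with hK1
    set K2 := (range (d+1)).filter (fun x => x % (2*N) = (k+N) % (2*N)) with hK2
    set KN := (range (d+1)).filter (fun x => x % N = k % N) with hKN
    have hkK1 : k ∈ K1 := by
      rw [hK1]
      simp only [mem_filter, mem_range]
      exact ⟨by omega, trivial⟩
    have hcross1 : ∀ k₁ ∈ K1, ∀ k₂ ∈ K1, d - k₂ ≠ k₁ := by
      intro k₁ h₁ k₂ h₂ hcon
      rw [hK1] at h₁ h₂
      simp only [mem_filter, mem_range] at h₁ h₂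
      apply hmod
      have e1 : k₁ + k₂ = d := by omega
      have h4 : Nat.ModEq (2*N) (k₁ + k₂) (k + k) :=
        Nat.ModEq.add h₁.2 h₂.2
      rw [e1] at h4
      have : Nat.ModEq (2*N) (2*k) d := by
        rw [show 2*k = k + k from by ring]
        exact h4.symm
      exact this
    have hcross2 : ∀ k₁ ∈ K2, ∀ k₂ ∈ K2, d - k₂ ≠ k₁ := by
      intro k₁ h₁ k₂ h₂ hcon
      rw [hK2] at h₁ h₂
      simp only [mem_filter, mem_range] at h₁ h₂
      apply hmod
      have e1 : k₁ + k₂ = d := by omega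
      have h4 : Nat.ModEq (2*N) (k₁ + k₂) ((k+N) + (k+N)) :=
        Nat.ModEq.add h₁.2 h₂.2
      rw [e1] at h4
      have h5 : Nat.ModEq (2*N) ((k+N)+(k+N)) (2*k) := by
        rw [show (k+N)+(k+N) = 2*k + 2*N from by ring]
        exact Nat.add_mod_right (2*k) (2*N) -- (2k + 2N) % (2N) = 2k % (2N)
      exact (h4.trans h5).symm
    have hdisj : Disjoint K1 K2 := by
      rw [hK1, hK2, Finset.disjoint_filter]
      intro x _ hx1 hx2
      have : (2*N : ℤ) ∣ ((k + N : ℕ) : ℤ) - (k : ℕ) := by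
        have h1 : Nat.ModEq (2*N) k (k+N) := hx1.symm.trans hx2
        exact_mod_cast (Nat.modEq_iff_dvd (n := 2*N)).mp h1
      have h2 : (2*N : ℤ) ∣ (N : ℤ) := by
        simpa using this
      have := Int.le_of_dvd (by exact_mod_cast (by omega : 0 < N)) h2
      omega
    have hunion : KN = K1 ∪ K2 := by
      rw [hKN, hK1, hK2, ← Finset.filter_or]
      apply Finset.filter_congr
      intro x _
      exact modsplit N hN x k
    have hcardsum : K1.card + K2.card ≤ 2*n + 1 := by
      have h1 := hcardN k
      rw [← hKN, hunion, Finset.card_union_of_disjoint hdisj] at h1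
      exact h1
    have hfunK1m : ∀ e : Polynomial ℂ, e.natDegree ≤ 2*m →
        (∀ k' ∈ K2, a k' = 0) →
        ∑ k' ∈ K1, a k' * (e.eval (((d - k' : ℕ)) : ℂ) - e.eval ((k' : ℕ) : ℂ)) = 0 := by
      intro e he hz2
      have h1 := hP2 k e he
      rw [← hKN, hunion, Finset.sum_union hdisj] at h1
      have h2 : ∑ k' ∈ K2, a k' * (e.eval (((d - k' : ℕ)) : ℂ) - e.eval ((k' : ℕ) : ℂ)) = 0 :=
        Finset.sum_eq_zero fun k' hk' => by rw [hz2 k' hk', zero_mul]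
      rw [h2, add_zero] at h1
      exact h1
    by_cases hsmall : K1.card ≤ n
    · exact killLemma a d K1 (2*n) (by rw [hK1]; exact hKle (2*N) k) hcross1 (by omega)
        (hP1 k) k hkK1
    · have hK2small : K2.card ≤ n := by omega
      have hz2 : ∀ k' ∈ K2, a k' = 0 :=
        killLemma a d K2 (2*n) (by rw [hK2]; exact hKle (2*N) (k+N)) hcross2 (by omega)
          (hP1 (k+N))
      have hcardK1 : K1.card ≤ n + 1 := by
        have hcc := hcard2N k
        rw [← hK1] at hcc
        exact hcc
      exact killLemma a d K1 (2*m) (by rw [hK1]; exact hKle (2*N) k) hcross1 (by omega)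
        (fun e he => hfunK1m e he hz2) k hkK1
  -- Step 7: conclusion
  intro j hj
  have hcoeff : ∀ k, k ≤ d → a (d - k) * (ε ^ j) ^ (d - k) * ((ε ^ j)⁻¹) ^ k = a k := by
    intro k hk
    by_cases hcase : (2*k) % (2*N) = d % (2*N)
    · have h1 : a (d - k) = a k := hA k hk hcase
      have h2 : ε ^ (d - k) = ε ^ k := by
        rw [hmodeq]
        have h3 : Nat.ModEq (2*N) ((d - k) + k) (k + k) := by
          rw [show (d - k) + k = d from by omega, show k + k = 2*k from by ring]
          exact (hcase : Nat.ModEq (2*N) (2*k) d).symm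
        exact Nat.ModEq.add_right_cancel' k h3
      have h4 : (ε ^ j) ^ (d - k) = (ε ^ j) ^ k := by
        rw [pow_right_comm, h2, pow_right_comm]
      rw [h1, h4, mul_assoc, ← mul_pow, mul_inv_cancel₀ (pow_ne_zero j hε0), one_pow, mul_one]
    · have h1 : a k = 0 := hB k hk hcase
      have hcase2 : ¬ ((2*(d - k)) % (2*N) = d % (2*N)) := by
        intro hcon
        apply hcase
        have h4 : Nat.ModEq (2*N) (2*(d-k) + 2*k) (d + 2*k) :=
          Nat.ModEq.add_right (2*k) hcon
        rw [show 2*(d-k) + 2*k = d + d from by omega] at h4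
        exact (Nat.ModEq.add_left_cancel' d h4).symm
      have h2 : a (d - k) = 0 := hB (d - k) (by omega) hcase2
      rw [h1, h2, zero_mul, zero_mul]
    
  have hexp : dihRefl N j p = ∑ k ∈ range (d + 1),
      monomial (Finsupp.single 0 (d - k) + Finsupp.single 1 k)
        (a k * (ε ^ j) ^ k * ((ε ^ j)⁻¹) ^ (d - k)) := by
    conv_lhs => rw [hpex]
    rw [map_sum]
    exact Finset.sum_congr rfl fun k _ => dihRefl_monomial N j k (d-k) (a k)
  rw [hexp]
  conv_rhs => rw [hpex]
  refine Finset.sum_nbij' (fun k => d - k) (fun k => d - k) ?_ ?_ ?_ ?_ ?_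
  · intro k hk
    simp only [mem_range] at hk ⊢
    omega
  · intro k hk
    simp only [mem_range] at hk ⊢
    omega
  · intro k hk
    simp only [mem_range] at hk
    show d - (d - k) = k
    omega
  · intro k hk
    simp only [mem_range] at hk
    show d - (d - k) = k
    omega
  · intro k hk
    simp only [mem_range] at hk
    have hkd : k ≤ d := by omega
    show monomial (Finsupp.single 0 (d - k) + Finsupp.single 1 k)
        (a k * (ε ^ j) ^ k * ((ε ^ j)⁻¹) ^ (d - k))
      = monomial (Finsupp.single 0 (d - k) + Finsupp.single 1 (d - (d - k))) (a (d - k))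
    rw [show d - (d - k) = k from by omega]
    congr 1
    have hcc := hcoeff (d - k) (by omega)
    rw [show d - (d - k) = k from by omega] at hcc
    exact hcc

end
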